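/- arXiv:2202.07789 — 7 statements merged into one kernel-verified Lean document; each statement's English description precedes it below -/
import Mathlib

section
/- Let S and A be nonempty types, r̃ : S × A → ℝ any reward function, T̂ : S × A → Set S a set-valued model with T̂(s,a) nonempty for every (s,a), and γ ∈ [0,1). If Q, Q' : S × A → ℝ are bounded functions with |Q(s,a) − Q'(s,a)| ≤ d for all (s,a), then for all (s,a), |(B̲Q)(s,a) − (B̲Q')(s,a)| ≤ γ·d. (That is, the Bellmin operator is a γ-contraction in the supremum norm.) -/
/-- The Bellmin operator: `(B̲Q)(s,a) = r̃(s,a) + γ · inf_{s' ∈ T̂(s,a)} sup_{a' ∈ A} Q(s',a')`. -/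
noncomputable def bellmin {S A : Type*} (rt : S × A → ℝ) (That : S × A → Set S)
    (γ : ℝ) (Q : S × A → ℝ) : S × A → ℝ :=
  fun p => rt p + γ * ⨅ s' : That p, ⨆ a' : A, Q (s'.1, a')

/-- The Bellmin operator is a `γ`-contraction in the supremum norm. -/
theorem bellmin_contraction {S A : Type*} [Nonempty S] [Nonempty A]
    (rt : S × A → ℝ) (That : S × A → Set S) (hT : ∀ p, (That p).Nonempty)
    (γ : ℝ) (hγ0 : 0 ≤ γ) (hγ1 : γ < 1)
    (Q Q' : S × A → ℝ) (M M' : ℝ)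
    (hQ : ∀ p, |Q p| ≤ M) (hQ' : ∀ p, |Q' p| ≤ M')
    (d : ℝ) (hd : ∀ p, |Q p - Q' p| ≤ d) :
    ∀ p, |bellmin rt That γ Q p - bellmin rt That γ Q' p| ≤ γ * d := by
  intro p
  haveI : Nonempty (That p) := (hT p).to_subtype
  set f : That p → ℝ := fun s' => ⨆ a' : A, Q (s'.1, a') with hf
  set g : That p → ℝ := fun s' => ⨆ a' : A, Q' (s'.1, a') with hg
  have bddQ : ∀ s' : That p, BddAbove (Set.range fun a' : A => Q (s'.1, a')) := by
    intro s'; exact ⟨M, by rintro _ ⟨a', rfl⟩; exact (abs_le.1 (hQ _)).2⟩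
  have bddQ' : ∀ s' : That p, BddAbove (Set.range fun a' : A => Q' (s'.1, a')) := by
    intro s'; exact ⟨M', by rintro _ ⟨a', rfl⟩; exact (abs_le.1 (hQ' _)).2⟩
  -- pointwise comparison of sups
  have hfg : ∀ s' : That p, f s' ≤ g s' + d := by
    intro s'
    refine ciSup_le fun a' => ?_
    have h1 : Q (s'.1, a') ≤ Q' (s'.1, a') + d := by
      have := (abs_le.1 (hd (s'.1, a'))).2; linarith
    exact h1.trans (add_le_add_left (le_ciSup (bddQ' s') a') d)
  have hgf : ∀ s' : That p, g s' ≤ f s' + d := by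
    intro s'
    refine ciSup_le fun a' => ?_
    have h1 : Q' (s'.1, a') ≤ Q (s'.1, a') + d := by
      have := (abs_le.1 (hd (s'.1, a'))).1; linarith
    exact h1.trans (add_le_add_left (le_ciSup (bddQ s') a') d)
  -- lower bounds for f, g
  have bddf : BddBelow (Set.range f) := by
    refine ⟨-M, ?_⟩; rintro _ ⟨s', rfl⟩
    exact le_trans (abs_le.1 (hQ (s'.1, Classical.arbitrary A))).1
      (le_ciSup (bddQ s') (Classical.arbitrary A))
  have bddg : BddBelow (Set.range g) := by
    refine ⟨-M', ?_⟩; rintro _ ⟨s', rfl⟩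
    exact le_trans (abs_le.1 (hQ' (s'.1, Classical.arbitrary A))).1
      (le_ciSup (bddQ' s') (Classical.arbitrary A))
  have h1 : (⨅ s', f s') ≤ (⨅ s', g s') + d := by
    rw [← sub_le_iff_le_add]
    refine le_ciInf fun s' => ?_
    have := ciInf_le bddf s'
    have := hfg s'
    linarith
  have h2 : (⨅ s', g s') ≤ (⨅ s', f s') + d := by
    rw [← sub_le_iff_le_add]
    refine le_ciInf fun s' => ?_
    have := ciInf_le bddg s'
    have := hgf s'
    linarith
  have habs : |(⨅ s', f s') - (⨅ s', g s')| ≤ d := abs_sub_le_iff.2 ⟨by linarith, by linarith⟩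
  simp only [bellmin]
  have : rt p + γ * (⨅ s', f s') - (rt p + γ * (⨅ s', g s')) = γ * ((⨅ s', f s') - (⨅ s', g s')) := by
    ring
  rw [this, abs_mul, abs_of_nonneg hγ0]
  exact mul_le_mul_of_nonneg_left habs hγ0
end

section
/- Let S and A be nonempty types, r̃ : S × A → ℝ, T : S × A → S a deterministic transition function, T̂ : S × A → Set S with T̂(s,a) nonempty for all (s,a), and γ ∈ [0,1). Assume T̂ is calibrated, i.e., T(s,a) ∈ T̂(s,a) for all (s,a). If Q, Q' : S × A → ℝ are bounded functions with Q(s,a) ≤ Q'(s,a) for all (s,a), then (B̲Q)(s,a) ≤ (B̃Q')(s,a) for all (s,a). -/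
/-- The Bellman operator with true dynamics:
`(B̃Q)(s,a) = r̃(s,a) + γ · sup_{a' ∈ A} Q(T(s,a),a')`. -/
noncomputable def bellman {S A : Type*} (rt : S × A → ℝ) (T : S × A → S)
    (γ : ℝ) (Q : S × A → ℝ) : S × A → ℝ :=
  fun p => rt p + γ * ⨆ a' : A, Q (T p, a')

/-- If `T̂` is calibrated and `Q ≤ Q'` pointwise, then `B̲Q ≤ B̃Q'` pointwise. -/
theorem bellmin_le_bellman {S A : Type*} [Nonempty S] [Nonempty A]
    (rt : S × A → ℝ) (T : S × A → S) (That : S × A → Set S)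
    (hT : ∀ p, (That p).Nonempty)
    (γ : ℝ) (hγ0 : 0 ≤ γ) (hγ1 : γ < 1)
    (hcal : ∀ p, T p ∈ That p)
    (Q Q' : S × A → ℝ) (M M' : ℝ)
    (hQ : ∀ p, |Q p| ≤ M) (hQ' : ∀ p, |Q' p| ≤ M')
    (hle : ∀ p, Q p ≤ Q' p) :
    ∀ p, bellmin rt That γ Q p ≤ bellman rt T γ Q' p := by
  intro p
  unfold bellmin bellman
  have hbQ : ∀ s : S, BddAbove (Set.range fun a' : A => Q (s, a')) :=
    fun s => ⟨M, by rintro _ ⟨a, rfl⟩; exact (abs_le.mp (hQ _)).2⟩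
  have hbQ' : ∀ s : S, BddAbove (Set.range fun a' : A => Q' (s, a')) :=
    fun s => ⟨M', by rintro _ ⟨a, rfl⟩; exact (abs_le.mp (hQ' _)).2⟩
  have hlow : BddBelow (Set.range fun s' : That p => ⨆ a' : A, Q (s'.1, a')) := by
    refine ⟨-M, ?_⟩
    rintro _ ⟨s', rfl⟩
    calc -M ≤ Q (s'.1, Classical.arbitrary A) := (abs_le.mp (hQ _)).1
      _ ≤ _ := le_ciSup (hbQ _) _
  have h1 : (⨅ s' : That p, ⨆ a' : A, Q (s'.1, a')) ≤ ⨆ a' : A, Q (T p, a') :=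
    ciInf_le hlow (⟨T p, hcal p⟩ : That p)
  have h2 : (⨆ a' : A, Q (T p, a')) ≤ ⨆ a' : A, Q' (T p, a') :=
    ciSup_mono (hbQ' _) fun a => hle _
  exact add_le_add_right (mul_le_mul_of_nonneg_left (h1.trans h2) hγ0) _
end

section
/- Let S and A be nonempty types, r̃ : S × A → ℝ a bounded reward function, T : S × A → S, T̂ : S × A → Set S with T̂(s,a) nonempty for all (s,a), and γ ∈ [0,1). Assume T̂ is calibrated, i.e., T(s,a) ∈ T̂(s,a) for all (s,a). If Q̲ : S × A → ℝ is a bounded fixed point of the Bellmin operator B̲ and Q̃ : S × A → ℝ is a bounded fixed point of the Bellman operator B̃, then Q̲(s,a) ≤ Q̃(s,a) for all (s,a). -/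
/-- If `T̂` is calibrated, a bounded fixed point of the Bellmin operator is pointwise a lower
bound on a bounded fixed point of the Bellman operator. -/
theorem bellmin_fixed_le_bellman_fixed {S A : Type*} [Nonempty S] [Nonempty A]
    (rt : S × A → ℝ) (R : ℝ) (hr : ∀ p, |rt p| ≤ R)
    (T : S × A → S) (That : S × A → Set S)
    (hT : ∀ p, (That p).Nonempty)
    (γ : ℝ) (hγ0 : 0 ≤ γ) (hγ1 : γ < 1)
    (hcal : ∀ p, T p ∈ That p)
    (Qlow Qtil : S × A → ℝ) (M M' : ℝ)
    (hQlow : ∀ p, |Qlow p| ≤ M) (hQtil : ∀ p, |Qtil p| ≤ M')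
    (hfixlow : bellmin rt That γ Qlow = Qlow)
    (hfixtil : bellman rt T γ Qtil = Qtil) :
    ∀ p, Qlow p ≤ Qtil p := by
  -- supremum of the difference
  set d : ℝ := ⨆ p, (Qlow p - Qtil p) with hd
  have hbddDiff : BddAbove (Set.range fun p => Qlow p - Qtil p) := by
    refine ⟨M + M', ?_⟩
    rintro x ⟨p, rfl⟩
    show Qlow p - Qtil p ≤ M + M'
    have h1 := (abs_le.mp (hQlow p)).2
    have h2 := (abs_le.mp (hQtil p)).1
    linarith
  have hled : ∀ p, Qlow p - Qtil p ≤ d := fun p => le_ciSup hbddDiff p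
  -- sup over actions is bounded above/below appropriately
  have hbddQlow : ∀ s : S, BddAbove (Set.range fun a' : A => Qlow (s, a')) := by
    intro s
    exact ⟨M, by rintro x ⟨a', rfl⟩; exact (abs_le.mp (hQlow (s, a'))).2⟩
  have hbddQtil : ∀ s : S, BddAbove (Set.range fun a' : A => Qtil (s, a')) := by
    intro s
    exact ⟨M', by rintro x ⟨a', rfl⟩; exact (abs_le.mp (hQtil (s, a'))).2⟩
  have key : ∀ p, Qlow p - Qtil p ≤ γ * d := by
    intro p
    have h1 : Qlow p = rt p + γ * ⨅ s' : That p, ⨆ a' : A, Qlow (s'.1, a') :=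
      (congrFun hfixlow p).symm
    have h2 : Qtil p = rt p + γ * ⨆ a' : A, Qtil (T p, a') :=
      (congrFun hfixtil p).symm
    haveI : Nonempty (That p) := (hT p).to_subtype
    -- inf ≤ sup at T p
    have hbddBelow : BddBelow (Set.range fun s' : That p => ⨆ a' : A, Qlow (s'.1, a')) := by
      refine ⟨-M, ?_⟩
      rintro x ⟨s', rfl⟩
      have := le_ciSup (hbddQlow s'.1) (Classical.arbitrary A)
      have h3 := (abs_le.mp (hQlow (s'.1, Classical.arbitrary A))).1
      linarith
    have hinf : (⨅ s' : That p, ⨆ a' : A, Qlow (s'.1, a')) ≤ ⨆ a' : A, Qlow (T p, a') :=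
      ciInf_le hbddBelow ⟨T p, hcal p⟩
    -- sup Qlow(Tp) ≤ sup Qtil(Tp) + d
    have hsup : (⨆ a' : A, Qlow (T p, a')) ≤ (⨆ a' : A, Qtil (T p, a')) + d := by
      refine ciSup_le fun a' => ?_
      have := hled (T p, a')
      have h4 := le_ciSup (hbddQtil (T p)) a'
      linarith
    have hmul : γ * (⨅ s' : That p, ⨆ a' : A, Qlow (s'.1, a'))
        ≤ γ * ((⨆ a' : A, Qtil (T p, a')) + d) :=
      mul_le_mul_of_nonneg_left (le_trans hinf hsup) hγ0
    rw [h1, h2]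
    ring_nf
    nlinarith [hmul]
  have hdd : d ≤ γ * d := ciSup_le key
  have hd0 : d ≤ 0 := by nlinarith
  intro p
  linarith [hled p, hd0]
end

section
/- Trajectory-level version of the reward-penalty lemma: let γ ∈ (0,1), H ≥ 1 a natural number, and r_min, r_max, C real numbers with r_min ≤ r_max and C > (r_max − r_min)/γᴴ − r_max. Let r : ℕ → ℝ be a sequence for which there exists t̄ ≤ H with r_min ≤ r_t ≤ r_max for all t < t̄ and r_t = −C for all t ≥ t̄ (an unsafe trajectory), and let r' : ℕ → ℝ satisfy r_min ≤ r'_t ≤ r_max for all t (a safe trajectory). Then ∑_{t=0}^{∞} γᵗ·r_t < ∑_{t=0}^{∞} γᵗ·r'_t. -/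
/-- Trajectory-level reward-penalty lemma: with `C > (r_max − r_min)/γᴴ − r_max`, any unsafe
trajectory (rewards in `[r_min, r_max]` before some step `t̄ ≤ H` and `−C` thereafter) has
strictly smaller discounted return than any safe trajectory (rewards in `[r_min, r_max]`
forever). -/
theorem unsafe_return_lt_safe_return (γ : ℝ) (hγ0 : 0 < γ) (hγ1 : γ < 1)
    (H : ℕ) (hH : 1 ≤ H) (rmin rmax C : ℝ) (hminmax : rmin ≤ rmax)
    (hC : C > (rmax - rmin) / γ ^ H - rmax)
    (r : ℕ → ℝ)
    (hr : ∃ tbar ≤ H, (∀ t < tbar, rmin ≤ r t ∧ r t ≤ rmax) ∧ ∀ t ≥ tbar, r t = -C)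
    (r' : ℕ → ℝ) (hr' : ∀ t, rmin ≤ r' t ∧ r' t ≤ rmax) :
    (∑' t : ℕ, γ ^ t * r t) < ∑' t : ℕ, γ ^ t * r' t := by
  obtain ⟨tbar, htbarH, hhead, htail⟩ := hr
  have h1γ : (0:ℝ) < 1 - γ := by linarith
  set M : ℝ := max (max |rmin| |rmax|) |C| with hM
  have hbdd : ∀ g : ℕ → ℝ, (∀ t, |g t| ≤ M) → Summable (fun t => γ ^ t * g t) := by
    intro g hg
    apply Summable.of_norm
    apply Summable.of_nonneg_of_le (fun t => norm_nonneg _) (fun t => ?_)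
      ((summable_geometric_of_lt_one hγ0.le hγ1).mul_right M)
    rw [norm_mul, norm_pow, Real.norm_eq_abs, Real.norm_eq_abs, abs_of_pos hγ0]
    exact mul_le_mul_of_nonneg_left (hg t) (pow_nonneg hγ0.le t)
  have hMr : ∀ t, |r t| ≤ M := by
    intro t
    by_cases ht : t < tbar
    · obtain ⟨h1, h2⟩ := hhead t ht
      have : |r t| ≤ max |rmin| |rmax| := by
        rw [abs_le]
        exact ⟨by linarith [neg_abs_le rmin, le_max_left |rmin| |rmax|],
          h2.trans ((le_abs_self rmax).trans (le_max_right _ _))⟩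
      exact this.trans (le_max_left _ _)
    · rw [htail t (not_lt.1 ht), abs_neg]
      exact le_max_right _ _
  have hMr' : ∀ t, |r' t| ≤ M := by
    intro t
    obtain ⟨h1, h2⟩ := hr' t
    refine le_trans ?_ (le_max_left _ _)
    rw [abs_le]
    exact ⟨by linarith [neg_abs_le rmin, le_max_left |rmin| |rmax|],
      h2.trans ((le_abs_self rmax).trans (le_max_right _ _))⟩
  have hsum : Summable (fun t => γ ^ t * r t) := hbdd r hMr
  have hsum' : Summable (fun t => γ ^ t * r' t) := hbdd r' hMr'
  -- split both sums at tbar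
  have hsplit : ∑ t ∈ Finset.range tbar, γ ^ t * r t + ∑' t, γ ^ (t + tbar) * r (t + tbar)
      = ∑' t, γ ^ t * r t := Summable.sum_add_tsum_nat_add tbar hsum
  have hsplit' : ∑ t ∈ Finset.range tbar, γ ^ t * r' t + ∑' t, γ ^ (t + tbar) * r' (t + tbar)
      = ∑' t, γ ^ t * r' t := Summable.sum_add_tsum_nat_add tbar hsum'
  -- tail of r is exactly geometric times -C
  have hgeo : ∑' t : ℕ, γ ^ t = (1 - γ)⁻¹ := tsum_geometric_of_lt_one hγ0.le hγ1
  have htailr : ∑' t : ℕ, γ ^ (t + tbar) * r (t + tbar) = γ ^ tbar * (-C) * (1 - γ)⁻¹ := by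
    have : ∀ t : ℕ, γ ^ (t + tbar) * r (t + tbar) = γ ^ tbar * (-C) * γ ^ t := by
      intro t
      rw [htail (t + tbar) (Nat.le_add_left _ _), pow_add]
      ring
    rw [tsum_congr this, tsum_mul_left, hgeo]
  have hsumtail' : Summable (fun t : ℕ => γ ^ (t + tbar) * r' (t + tbar)) :=
    (summable_nat_add_iff tbar).2 hsum'
  have htailr' : γ ^ tbar * rmin * (1 - γ)⁻¹ ≤ ∑' t : ℕ, γ ^ (t + tbar) * r' (t + tbar) := by
    have h1 : ∑' t : ℕ, γ ^ tbar * rmin * γ ^ t = γ ^ tbar * rmin * (1 - γ)⁻¹ := by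
      rw [tsum_mul_left, hgeo]
    rw [← h1]
    apply Summable.tsum_le_tsum _ ((summable_geometric_of_lt_one hγ0.le hγ1).mul_left _) hsumtail'
    intro t
    have := (hr' (t + tbar)).1
    have hp : (0:ℝ) ≤ γ ^ (t + tbar) := pow_nonneg hγ0.le _
    calc γ ^ tbar * rmin * γ ^ t = γ ^ (t + tbar) * rmin := by rw [pow_add]; ring
      _ ≤ γ ^ (t + tbar) * r' (t + tbar) := mul_le_mul_of_nonneg_left this hp
  -- head bounds
  have hG : ∑ t ∈ Finset.range tbar, γ ^ t = (1 - γ ^ tbar) / (1 - γ) := by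
    rw [geom_sum_eq (by intro h; rw [h] at hγ1; linarith : γ ≠ 1),
      div_eq_div_iff (by intro h; linarith : γ - 1 ≠ 0) (by intro h; linarith : 1 - γ ≠ 0)]
    ring
  have hheadr : ∑ t ∈ Finset.range tbar, γ ^ t * r t
      ≤ (∑ t ∈ Finset.range tbar, γ ^ t) * rmax := by
    rw [Finset.sum_mul]
    apply Finset.sum_le_sum
    intro t ht
    exact mul_le_mul_of_nonneg_left (hhead t (Finset.mem_range.1 ht)).2 (pow_nonneg hγ0.le t)
  have hheadr' : (∑ t ∈ Finset.range tbar, γ ^ t) * rmin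
      ≤ ∑ t ∈ Finset.range tbar, γ ^ t * r' t := by
    rw [Finset.sum_mul]
    apply Finset.sum_le_sum
    intro t ht
    exact mul_le_mul_of_nonneg_left (hr' t).1 (pow_nonneg hγ0.le t)
  -- the key algebraic fact
  have hγH : (0:ℝ) < γ ^ H := pow_pos hγ0 H
  have hCrmax : 0 < C + rmax := by
    have : (0:ℝ) ≤ (rmax - rmin) / γ ^ H := div_nonneg (by linarith) hγH.le
    linarith
  have hpow : γ ^ H ≤ γ ^ tbar := pow_le_pow_of_le_one hγ0.le hγ1.le htbarH
  have hkey : rmax - rmin < γ ^ tbar * (C + rmax) := by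
    have h2 : rmax - rmin < γ ^ H * (C + rmax) := by
      have := (div_lt_iff₀ hγH).1 (by linarith : (rmax - rmin) / γ ^ H < C + rmax)
      linarith [this]
    have h3 : γ ^ H * (C + rmax) ≤ γ ^ tbar * (C + rmax) :=
      mul_le_mul_of_nonneg_right hpow hCrmax.le
    linarith
  -- assemble
  have hγtb0 : (0:ℝ) < γ ^ tbar := pow_pos hγ0 tbar
  have hγtb1 : γ ^ tbar ≤ 1 := pow_le_one₀ hγ0.le hγ1.le
  have hfin : (1 - γ ^ tbar) / (1 - γ) * rmax + γ ^ tbar * (-C) * (1 - γ)⁻¹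
      < (1 - γ ^ tbar) / (1 - γ) * rmin + γ ^ tbar * rmin * (1 - γ)⁻¹ := by
    have hD : (0:ℝ) < (1 - γ)⁻¹ := inv_pos.2 h1γ
    have h5 : (1 - γ ^ tbar) * rmax + γ ^ tbar * (-C) < (1 - γ ^ tbar) * rmin + γ ^ tbar * rmin := by
      nlinarith [hkey]
    rw [div_eq_mul_inv]
    nlinarith [mul_lt_mul_of_pos_right h5 hD]
  calc (∑' t : ℕ, γ ^ t * r t)
      = ∑ t ∈ Finset.range tbar, γ ^ t * r t + γ ^ tbar * (-C) * (1 - γ)⁻¹ := by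
        rw [← hsplit, htailr]
    _ ≤ (1 - γ ^ tbar) / (1 - γ) * rmax + γ ^ tbar * (-C) * (1 - γ)⁻¹ := by
        rw [← hG]; linarith [hheadr]
    _ < (1 - γ ^ tbar) / (1 - γ) * rmin + γ ^ tbar * rmin * (1 - γ)⁻¹ := hfin
    _ ≤ ∑ t ∈ Finset.range tbar, γ ^ t * r' t + ∑' t, γ ^ (t + tbar) * r' (t + tbar) := by
        rw [← hG]; linarith [hheadr', htailr']
    _ = ∑' t : ℕ, γ ^ t * r' t := hsplit'
end

section
/- Core comparison argument of the main safety theorem: let γ ∈ (0,1), H ≥ 1 a natural number, and r_min, r_max, C real numbers with C > (r_max − r_min)/γᴴ − r_max. Let Q̲, Q̃ : X → ℝ be functions on a type X with Q̲(x) ≤ Q̃(x) for all x. Suppose x' ∈ X satisfies Q̃(x') ≤ (r_max·(1 − γᴴ) − C·γᴴ)/(1 − γ) and x ∈ X satisfies Q̲(x) ≥ r_min/(1 − γ). Then Q̲(x) > Q̲(x'). -/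
/-- Core comparison argument of the main safety theorem: if `Q̲ ≤ Q̃` pointwise, `x'` is an
unsafe action (`Q̃(x') ≤ (r_max·(1 − γᴴ) − C·γᴴ)/(1 − γ)`) and `x` is a certified safe action
(`Q̲(x) ≥ r_min/(1 − γ)`), then `Q̲(x) > Q̲(x')` whenever `C > (r_max − r_min)/γᴴ − r_max`. -/
theorem safe_action_q_gt_unsafe {X : Type*} (γ : ℝ) (hγ0 : 0 < γ) (hγ1 : γ < 1)
    (H : ℕ) (hH : 1 ≤ H) (rmin rmax C : ℝ)
    (hC : C > (rmax - rmin) / γ ^ H - rmax)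
    (Qlow Qtil : X → ℝ) (hle : ∀ x, Qlow x ≤ Qtil x)
    (x' : X) (hx' : Qtil x' ≤ (rmax * (1 - γ ^ H) - C * γ ^ H) / (1 - γ))
    (x : X) (hx : Qlow x ≥ rmin / (1 - γ)) :
    Qlow x > Qlow x' := by
  have hγH : (0:ℝ) < γ ^ H := pow_pos hγ0 H
  have h1γ : (0:ℝ) < 1 - γ := by linarith
  have key : rmax * (1 - γ ^ H) - C * γ ^ H < rmin := by
    have := (div_lt_iff₀ hγH).mp (by linarith : (rmax - rmin) / γ ^ H < C + rmax)
    nlinarith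
  calc Qlow x' ≤ Qtil x' := hle x'
    _ ≤ (rmax * (1 - γ ^ H) - C * γ ^ H) / (1 - γ) := hx'
    _ < rmin / (1 - γ) := by exact (div_lt_div_iff_of_pos_right h1γ).mpr key
    _ ≤ Qlow x := hx
end

section
/- Stochastic extension, first inequality: let γ ∈ (0,1), H a natural number, p, q, r_min, r_max, C real numbers with 0 ≤ p, q·γᴴ > p. If C > (r_max·(1 − q·γᴴ) − (1 − p)·r_min)/(q·γᴴ − p), then (−p·C + (1 − p)·r_min)/(1 − γ) > q·R_C + (1 − q)·r_max/(1 − γ), where R_C := (r_max·(1 − γᴴ) − C·γᴴ)/(1 − γ). -/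
/-- Stochastic extension, first inequality: if `C > α₁`, then
`(−p·C + (1 − p)·r_min)/(1 − γ) > q·R_C + (1 − q)·r_max/(1 − γ)`. -/
theorem stochastic_first_inequality (γ : ℝ) (hγ0 : 0 < γ) (hγ1 : γ < 1)
    (H : ℕ) (p q rmin rmax C : ℝ) (hp : 0 ≤ p) (hqγ : q * γ ^ H > p)
    (hC : C > (rmax * (1 - q * γ ^ H) - (1 - p) * rmin) / (q * γ ^ H - p)) :
    (-p * C + (1 - p) * rmin) / (1 - γ)
      > q * ((rmax * (1 - γ ^ H) - C * γ ^ H) / (1 - γ)) + (1 - q) * rmax / (1 - γ) := by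
  have h1 : (0:ℝ) < 1 - γ := by linarith
  have h2 : (0:ℝ) < q * γ ^ H - p := by linarith
  rw [gt_iff_lt, div_lt_iff₀ h2] at hC
  rw [gt_iff_lt, ← mul_div_assoc, ← add_div, div_lt_div_iff₀ h1 h1]
  nlinarith [hC]
end

section
/- Stochastic extension, combined condition: let γ ∈ (0,1), H a natural number, p, q, r_min, r_max, C real numbers with 0 ≤ p and q·γᴴ > p (which also implies γᴴ > p since q ≤ 1, assuming 0 ≤ q ≤ 1). Set α₁ := (r_max·(1 − q·γᴴ) − (1 − p)·r_min)/(q·γᴴ − p) and α₂ := (r_max·(2 − q − γᴴ) − (1 − p)·r_min)/(γᴴ − p). If C > max{α₁, α₂, 0}, then both (−p·C + (1 − p)·r_min)/(1 − γ) > q·R_C + (1 − q)·r_max/(1 − γ) and (−p·C + (1 − p)·r_min)/(1 − γ) > R_C + (1 − q)·r_max/(1 − γ) hold, where R_C := (r_max·(1 − γᴴ) − C·γᴴ)/(1 − γ). -/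
/-- Stochastic extension, combined condition: if `C > max{α₁, α₂, 0}`, then both inequalities
ensuring that a `p`-safe action has larger penalized Q-value than a `p`-irrecoverable one
hold. -/
theorem stochastic_combined_condition (γ : ℝ) (hγ0 : 0 < γ) (hγ1 : γ < 1)
    (H : ℕ) (p q rmin rmax C : ℝ) (hp : 0 ≤ p) (hq0 : 0 ≤ q) (hq1 : q ≤ 1)
    (hqγ : q * γ ^ H > p)
    (hC : C > max (max ((rmax * (1 - q * γ ^ H) - (1 - p) * rmin) / (q * γ ^ H - p))
        ((rmax * (2 - q - γ ^ H) - (1 - p) * rmin) / (γ ^ H - p))) 0) :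
    (-p * C + (1 - p) * rmin) / (1 - γ)
        > q * ((rmax * (1 - γ ^ H) - C * γ ^ H) / (1 - γ)) + (1 - q) * rmax / (1 - γ) ∧
      (-p * C + (1 - p) * rmin) / (1 - γ)
        > (rmax * (1 - γ ^ H) - C * γ ^ H) / (1 - γ) + (1 - q) * rmax / (1 - γ) := by
  have hγH : 0 < γ ^ H := pow_pos hγ0 H
  have hd1 : 0 < q * γ ^ H - p := by linarith
  have hd2 : 0 < γ ^ H - p := by nlinarith
  have h1 : (rmax * (1 - q * γ ^ H) - (1 - p) * rmin) / (q * γ ^ H - p) < C :=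
    lt_of_le_of_lt (le_max_left _ _) (lt_of_le_of_lt (le_max_left _ _) hC)
  have h2 : (rmax * (2 - q - γ ^ H) - (1 - p) * rmin) / (γ ^ H - p) < C :=
    lt_of_le_of_lt (le_max_right _ _) (lt_of_le_of_lt (le_max_left _ _) hC)
  have h1' : rmax * (1 - q * γ ^ H) - (1 - p) * rmin < C * (q * γ ^ H - p) :=
    (div_lt_iff₀ hd1).mp h1
  have h2' : rmax * (2 - q - γ ^ H) - (1 - p) * rmin < C * (γ ^ H - p) :=
    (div_lt_iff₀ hd2).mp h2
  have hγpos : 0 < 1 - γ := by linarith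
  constructor
  · rw [gt_iff_lt, ← mul_div_assoc, ← add_div, div_lt_div_iff₀ hγpos hγpos]
    nlinarith
  · rw [gt_iff_lt, ← add_div, div_lt_div_iff₀ hγpos hγpos]
    nlinarith
end
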